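/- An n×n complex contraction all of whose eigenvalues have modulus 1 is unitary. -/

import Mathlib

open Matrix
open scoped Matrix.Norms.L2Operator

/-- Every root of the characteristic polynomial of a complex matrix lies in its spectrum. -/
lemma aux_root_mem_spectrum {N : ℕ} (M : Matrix (Fin N) (Fin N) ℂ) {μ : ℂ}
    (h : μ ∈ M.charpoly.roots) : μ ∈ spectrum ℂ M := by
  have hroot : M.charpoly.IsRoot μ := Polynomial.isRoot_of_mem_roots h
  rw [spectrum.mem_iff]
  intro hunit
  have hdet : (Matrix.scalar (Fin N) μ - M).det = 0 := by
    have := eval_det (Matrix.charmatrix M) μ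
    rw [Matrix.matPolyEquiv_charmatrix] at this
    simp only [Polynomial.eval_sub, Polynomial.eval_X, Polynomial.eval_C] at this
    rw [← this]
    exact hroot
  have hsc : (algebraMap ℂ (Matrix (Fin N) (Fin N) ℂ)) μ = Matrix.scalar (Fin N) μ := by
    ext i j
    simp [Matrix.algebraMap_eq_diagonal, Matrix.scalar, Matrix.diagonal]
  rw [hsc] at hunit
  have := (Matrix.isUnit_iff_isUnit_det _).mp hunit
  rw [hdet] at this
  exact (not_isUnit_zero this).elim

/-- A contraction all of whose eigenvalues have modulus one is unitary. -/
theorem stmt14 (n : ℕ) (T : Matrix (Fin n) (Fin n) ℂ) (hT : ‖T‖ ≤ 1)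
    (hspec : ∀ lam ∈ spectrum ℂ T, ‖lam‖ = 1) :
    Tᴴ * T = 1 := by
  set A : Matrix (Fin n) (Fin n) ℂ := Tᴴ * T with hAdef
  have hA : A.IsHermitian := Matrix.isHermitian_conjTranspose_mul_self T
  -- ‖A‖ ≤ 1
  have hAnorm : ‖A‖ ≤ 1 := by
    rw [hAdef, Matrix.l2_opNorm_conjTranspose_mul_self]
    calc ‖T‖ * ‖T‖ ≤ 1 * 1 := by
          apply mul_le_mul hT hT (norm_nonneg T) zero_le_one
      _ = 1 := one_mul 1
  -- each eigenvalue of A is ≤ 1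
  have heig_le : ∀ i, hA.eigenvalues i ≤ 1 := by
    intro i
    have hv := hA.mulVec_eigenvectorBasis i
    set v : EuclideanSpace ℂ (Fin n) := hA.eigenvectorBasis i with hvdef
    have hvnorm : ‖v‖ = 1 := hA.eigenvectorBasis.orthonormal.1 i
    have hle := A.l2_opNorm_mulVec v
    have hmv : A *ᵥ (v : Fin n → ℂ) = (hA.eigenvalues i : ℂ) • (v : Fin n → ℂ) := by
      simpa using hv
    rw [hmv] at hle
    have : ‖(EuclideanSpace.equiv (Fin n) ℂ).symm ((hA.eigenvalues i : ℂ) • (v : Fin n → ℂ))‖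
        = |hA.eigenvalues i| * ‖v‖ := by
      have : (EuclideanSpace.equiv (Fin n) ℂ).symm ((hA.eigenvalues i : ℂ) • (v : Fin n → ℂ))
          = (hA.eigenvalues i : ℂ) • v := rfl
      rw [this, norm_smul]
      simp
    rw [this, hvnorm, mul_one] at hle
    calc hA.eigenvalues i ≤ |hA.eigenvalues i| := le_abs_self _
      _ ≤ ‖A‖ * 1 := hle
      _ ≤ 1 := by rw [mul_one]; exact hAnorm
  have heig_nonneg : ∀ i, 0 ≤ hA.eigenvalues i := fun i =>
    Matrix.eigenvalues_conjTranspose_mul_self_nonneg T i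
  -- |det T| = 1
  have hdetT : ‖T.det‖ = 1 := by
    rw [Matrix.det_eq_prod_roots_charpoly, show ‖T.charpoly.roots.prod‖ = (normHom : ℂ →*₀ ℝ) T.charpoly.roots.prod from rfl, map_multiset_prod]
    apply Multiset.prod_eq_one
    intro x hx
    rw [Multiset.mem_map] at hx
    obtain ⟨μ, hμ, rfl⟩ := hx
    exact hspec μ (aux_root_mem_spectrum T hμ)
  -- det A = 1
  have hdetA : A.det = 1 := by
    rw [hAdef, Matrix.det_mul, Matrix.det_conjTranspose]
    rw [Complex.star_def, ← Complex.normSq_eq_conj_mul_self, ← Complex.sq_norm, hdetT]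
    norm_num
  -- product of eigenvalues = 1
  have hprod : ∏ i, hA.eigenvalues i = 1 := by
    have := hA.det_eq_prod_eigenvalues
    rw [hdetA] at this
    have h2 : ((∏ i, hA.eigenvalues i : ℝ) : ℂ) = 1 := by
      push_cast
      exact this.symm
    exact_mod_cast h2
  -- each eigenvalue = 1
  have heig_eq : ∀ i, hA.eigenvalues i = 1 := by
    intro j
    refine le_antisymm (heig_le j) ?_
    have hrest : ∏ i ∈ Finset.univ.erase j, hA.eigenvalues i ≤ 1 :=
      Finset.prod_le_one (fun i _ => heig_nonneg i) (fun i _ => heig_le i)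
    have hrest0 : 0 ≤ ∏ i ∈ Finset.univ.erase j, hA.eigenvalues i :=
      Finset.prod_nonneg (fun i _ => heig_nonneg i)
    have hsplit : hA.eigenvalues j * ∏ i ∈ Finset.univ.erase j, hA.eigenvalues i = 1 := by
      rw [Finset.mul_prod_erase _ _ (Finset.mem_univ j)]
      exact hprod
    nlinarith [heig_nonneg j]
  -- conclude via spectral theorem
  have hdiag : Matrix.diagonal (RCLike.ofReal ∘ hA.eigenvalues) =
      (1 : Matrix (Fin n) (Fin n) ℂ) := by
    have h1 : (RCLike.ofReal ∘ hA.eigenvalues : Fin n → ℂ) = fun _ => 1 := by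
      funext i
      simp [heig_eq i]
    rw [h1, Matrix.diagonal_one]
  calc A = (hA.eigenvectorUnitary : Matrix (Fin n) (Fin n) ℂ)
        * Matrix.diagonal (RCLike.ofReal ∘ hA.eigenvalues)
        * (star (hA.eigenvectorUnitary : Matrix (Fin n) (Fin n) ℂ)) := hA.spectral_theorem
    _ = 1 := by
        rw [hdiag, mul_one]
        exact Matrix.mem_unitaryGroup_iff.mp hA.eigenvectorUnitary.2
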